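/- arXiv:1009.1982 — 5 statements merged into one kernel-verified Lean document; each statement's English description precedes it below -/
import Mathlib

section
/- Let $\varepsilon, \Omega > 0$ with $\sqrt{\pi}\,\varepsilon\,\Omega > 2$, $R_h = \sqrt{1 - 2/(\sqrt{\pi}\varepsilon\Omega)}$, and $\rho^{TF}(r) = \tfrac{\varepsilon^2\Omega^2}{2}\max(r^2 - R_h^2, 0)$. Then the Thomas–Fermi energy $E^{TF} = \int_{B(0,1)} \big(-\Omega^2 r^2 \rho^{TF} + \varepsilon^{-2}(\rho^{TF})^2\big)$ equals $-\Omega^2\big(1 - \tfrac{4}{3\sqrt{\pi}\varepsilon\Omega}\big)$. -/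
open MeasureTheory Real

/-- The Thomas–Fermi energy of the TF minimizer:
`E^TF = ∫_{B(0,1)} (-Ω² r² ρ^TF + ε⁻² (ρ^TF)²) = -Ω² (1 - 4/(3√π ε Ω))`. -/
theorem stmt_1 (ε Ω : ℝ) (hε : 0 < ε) (hΩ : 0 < Ω)
    (h : 2 < Real.sqrt π * ε * Ω) :
    let Rh : ℝ := Real.sqrt (1 - 2 / (Real.sqrt π * ε * Ω))
    let ρTF : EuclideanSpace ℝ (Fin 2) → ℝ :=
      fun x => ε ^ 2 * Ω ^ 2 / 2 * max (‖x‖ ^ 2 - Rh ^ 2) 0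
    (∫ x in Metric.closedBall (0 : EuclideanSpace ℝ (Fin 2)) 1,
        (-(Ω ^ 2) * ‖x‖ ^ 2 * ρTF x + (ε ^ 2)⁻¹ * ρTF x ^ 2)) =
      -(Ω ^ 2) * (1 - 4 / (3 * Real.sqrt π * ε * Ω)) := by
  intro Rh ρTF
  have hs0 : 0 < Real.sqrt π := Real.sqrt_pos.mpr Real.pi_pos
  set s := Real.sqrt π with hsdef
  have hs2 : s ^ 2 = π := Real.sq_sqrt Real.pi_pos.le
  have hsΩ : 0 < s * ε * Ω := by positivity
  have ha1 : 2 / (s * ε * Ω) < 1 := (div_lt_one hsΩ).mpr h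
  have ha0 : 0 < 2 / (s * ε * Ω) := by positivity
  have hRh2 : Rh ^ 2 = 1 - 2 / (s * ε * Ω) := Real.sq_sqrt (by linarith)
  have hRh0 : 0 ≤ Rh := Real.sqrt_nonneg _
  have hRh1 : Rh ≤ 1 := by nlinarith
  set c : ℝ := ε ^ 2 * Ω ^ 2 / 2 with hc
  set F : ℝ → ℝ := fun r =>
    -(Ω ^ 2) * r ^ 2 * (c * max (r ^ 2 - Rh ^ 2) 0)
      + (ε ^ 2)⁻¹ * (c * max (r ^ 2 - Rh ^ 2) 0) ^ 2 with hF
  set f : ℝ → ℝ := fun r => if r ≤ 1 then F r else 0 with hf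
  have step1 : (∫ x in Metric.closedBall (0 : EuclideanSpace ℝ (Fin 2)) 1,
        (-(Ω ^ 2) * ‖x‖ ^ 2 * ρTF x + (ε ^ 2)⁻¹ * ρTF x ^ 2))
      = ∫ x : EuclideanSpace ℝ (Fin 2), f ‖x‖ := by
    rw [setIntegral_congr_fun (Metric.isClosed_closedBall.measurableSet)
      (g := fun x => f ‖x‖) ?_]
    · exact setIntegral_eq_integral_of_forall_compl_eq_zero (fun x hx => by
        simp only [Metric.mem_closedBall, dist_zero_right, not_le] at hx
        simp [hf, not_le.mpr hx])
    · intro x hx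
      simp only [Metric.mem_closedBall, dist_zero_right] at hx
      simp [hf, hx, hF, ρTF, hc]
  rw [step1, MeasureTheory.integral_fun_norm_addHaar (volume : Measure (EuclideanSpace ℝ (Fin 2))) f]
  have hdim : Module.finrank ℝ (EuclideanSpace ℝ (Fin 2)) = 2 := finrank_euclideanSpace_fin
  rw [hdim]
  have hvol : (volume (Metric.ball (0 : EuclideanSpace ℝ (Fin 2)) 1)).toReal = π := by
    rw [EuclideanSpace.volume_ball]
    simp [Real.sq_sqrt Real.pi_pos.le]
    norm_num [Real.Gamma_two, ENNReal.toReal_ofReal Real.pi_pos.le]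
  rw [measureReal_def, hvol]
  -- reduce the radial integral to Ioc Rh 1
  have hsub1 : Set.Ioc (0:ℝ) 1 ⊆ Set.Ioi 0 := Set.Ioc_subset_Ioi_self
  have e1 : (∫ y in Set.Ioi (0:ℝ), y ^ (2-1) • f y)
      = ∫ y in Set.Ioc Rh 1, y * F y := by
    rw [setIntegral_eq_of_subset_of_forall_diff_eq_zero measurableSet_Ioi
      (Set.Ioc_subset_Ioi_self.trans' (Set.Ioc_subset_Ioc_left hRh0))
      (fun y hy => by
        simp only [Set.mem_diff, Set.mem_Ioi, Set.mem_Ioc, not_and, not_le] at hy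
        obtain ⟨hy0, hy1⟩ := hy
        by_cases hle : y ≤ 1
        · have hyRh : y ≤ Rh := by
            by_contra hcon
            exact absurd (hy1 (not_le.mp hcon)) (not_lt.mpr hle)
          have hmax : max (y ^ 2 - Rh ^ 2) 0 = 0 :=
            max_eq_right (by nlinarith)
          simp [hf, hF, hle, hmax]
        · simp [hf, hle])]
    refine setIntegral_congr_fun measurableSet_Ioc (fun y hy => ?_)
    have hy1 : y ≤ 1 := hy.2
    simp [hf, hy1, smul_eq_mul]
  rw [e1]
  have e2 : (∫ y in Set.Ioc Rh 1, y * F y) = ∫ y in Rh..1, y * F y := by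
    rw [intervalIntegral.integral_of_le hRh1]
  rw [e2]
  -- on [Rh,1] the max is r^2 - Rh^2; evaluate a polynomial integral
  set A : ℝ := -(Ω ^ 2) * c + (ε ^ 2)⁻¹ * c ^ 2 with hA
  set B : ℝ := (Ω ^ 2) * c * Rh ^ 2 - 2 * (ε ^ 2)⁻¹ * c ^ 2 * Rh ^ 2 with hB
  set C : ℝ := (ε ^ 2)⁻¹ * c ^ 2 * Rh ^ 4 with hC
  have e3 : (∫ y in Rh..1, y * F y)
      = ∫ y in Rh..1, (A * y ^ 5 + B * y ^ 3 + C * y) := by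
    refine intervalIntegral.integral_congr (fun y hy => ?_)
    rw [Set.uIcc_of_le hRh1] at hy
    have hmax : max (y ^ 2 - Rh ^ 2) 0 = y ^ 2 - Rh ^ 2 :=
      max_eq_left (by nlinarith [hy.1, hy.2, hRh0])
    simp only [hF, hmax, hA, hB, hC]
    ring
  rw [e3]
  have i5 : IntervalIntegrable (fun y : ℝ => A * y ^ 5) volume Rh 1 :=
    (continuous_const.mul (continuous_pow 5)).intervalIntegrable _ _
  have i3 : IntervalIntegrable (fun y : ℝ => B * y ^ 3) volume Rh 1 :=
    (continuous_const.mul (continuous_pow 3)).intervalIntegrable _ _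
  have i1 : IntervalIntegrable (fun y : ℝ => C * y) volume Rh 1 :=
    (continuous_const.mul continuous_id).intervalIntegrable _ _
  open intervalIntegral in
  rw [intervalIntegral.integral_add (i5.add i3) i1,
    intervalIntegral.integral_add i5 i3,
    intervalIntegral.integral_const_mul, intervalIntegral.integral_const_mul,
    intervalIntegral.integral_const_mul, integral_pow, integral_pow, integral_id]
  -- final arithmetic
  have h6 : Rh ^ 6 = (Rh ^ 2) ^ 3 := by ring
  have h4 : Rh ^ 4 = (Rh ^ 2) ^ 2 := by ring
  have hπ : π = s ^ 2 := hs2.symm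
  have hsne : s ≠ 0 := ne_of_gt hs0
  have hεne : ε ≠ 0 := ne_of_gt hε
  have hΩne : Ω ≠ 0 := ne_of_gt hΩ
  simp only [smul_eq_mul, nsmul_eq_mul, Nat.cast_ofNat, hA, hB, hC, hc, h6, h4, hRh2, hπ]
  field_simp
  ring
end

section
/- Among all nonnegative measurable functions $\rho$ on the unit disc $B(0,1)\subset\mathbb{R}^2$ with $\int_{B(0,1)}\rho = 1$ and $\rho\in L^2$, the functional $\mathcal{E}^{TF}[\rho] = \int_{B(0,1)}\big(-\Omega^2 r^2\rho + \varepsilon^{-2}\rho^2\big)$ is uniquely minimized (a.e.) by $\rho^{TF}(r) = \tfrac12\max(\varepsilon^2\mu^{TF} + \varepsilon^2\Omega^2 r^2, 0)$ for the unique constant $\mu^{TF}$ making $\rho^{TF}$ have unit mass, provided $\sqrt{\pi}\varepsilon\Omega > 2$. -/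
open MeasureTheory Real

lemma volball (r : ℝ) (hr : 0 ≤ r) :
    volume (Metric.closedBall (0:EuclideanSpace ℝ (Fin 2)) r) = ENNReal.ofReal (π * r^2) := by
  rw [EuclideanSpace.volume_closedBall]
  simp [Real.Gamma_two]
  rw [← ENNReal.ofReal_pow hr, ← ENNReal.ofReal_mul (by positivity)]
  norm_num
  ring_nf
  rw [Real.sq_sqrt pi_pos.le]

lemma radial (f : ℝ → ℝ) :
    ∫ x : EuclideanSpace ℝ (Fin 2), f ‖x‖ = 2 * π * ∫ y in Set.Ioi (0:ℝ), y * f y := by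
  rw [MeasureTheory.integral_fun_norm_addHaar volume f]
  have h1 : Module.finrank ℝ (EuclideanSpace ℝ (Fin 2)) = 2 := by simp [finrank_euclideanSpace]
  have h2 : volume (Metric.ball (0:EuclideanSpace ℝ (Fin 2)) 1) = ENNReal.ofReal π := by
    rw [← MeasureTheory.Measure.addHaar_closedBall_eq_addHaar_ball, volball 1 zero_le_one]; norm_num
  rw [h1, measureReal_def, h2]
  simp only [smul_eq_mul, nsmul_eq_mul, Nat.cast_ofNat, ENNReal.toReal_ofReal pi_pos.le, pow_one]
  norm_num
  ring

lemma key_int (a : ℝ) (ha : 0 ≤ a) (ha1 : a ≤ 1) :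
    ∫ x in Metric.closedBall (0:EuclideanSpace ℝ (Fin 2)) 1, max (‖x‖^2 - a) 0
      = π * (1-a)^2 / 2 := by
  set g : ℝ → ℝ := Set.indicator (Set.Icc 0 1) (fun r => max (r^2 - a) 0) with hg
  have step1 : ∫ x in Metric.closedBall (0:EuclideanSpace ℝ (Fin 2)) 1, max (‖x‖^2 - a) 0
      = ∫ x : EuclideanSpace ℝ (Fin 2), g ‖x‖ := by
    rw [← MeasureTheory.integral_indicator (measurableSet_closedBall)]
    congr 1; ext x
    by_cases hx : x ∈ Metric.closedBall (0:EuclideanSpace ℝ (Fin 2)) 1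
    · rw [Set.indicator_of_mem hx, hg, Set.indicator_of_mem]
      exact ⟨norm_nonneg x, by simpa [Metric.mem_closedBall, dist_zero_right] using hx⟩
    · rw [Set.indicator_of_notMem hx, hg, Set.indicator_of_notMem]
      intro hc
      exact hx (by simpa [Metric.mem_closedBall, dist_zero_right] using hc.2)
  rw [step1, radial g]
  have step2 : ∫ y in Set.Ioi (0:ℝ), y * g y = ∫ y in Set.Ioc (0:ℝ) 1, y * max (y^2-a) 0 := by
    rw [show (fun y => y * g y) = Set.indicator (Set.Icc 0 1) (fun y => y * max (y^2-a) 0) by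
      ext y; by_cases hy : y ∈ Set.Icc (0:ℝ) 1 <;>
        simp [hg, Set.indicator_of_mem, Set.indicator_of_notMem, hy]]
    rw [MeasureTheory.setIntegral_indicator measurableSet_Icc]
    congr 1
    rw [show Set.Ioi (0:ℝ) ∩ Set.Icc 0 1 = Set.Ioc (0:ℝ) 1 from
      Set.ext fun y => ⟨fun ⟨h1, h2⟩ => ⟨h1, h2.2⟩, fun ⟨h1, h2⟩ => ⟨h1, h1.le, h2⟩⟩]
  rw [step2, ← intervalIntegral.integral_of_le (zero_le_one)]
  have hs : Real.sqrt a ∈ Set.Icc (0:ℝ) 1 :=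
    ⟨Real.sqrt_nonneg a, by rw [show (1:ℝ) = Real.sqrt 1 by simp]; exact Real.sqrt_le_sqrt ha1⟩
  have hcont : Continuous (fun y : ℝ => y * max (y^2-a) 0) := by continuity
  have hsplit := intervalIntegral.integral_add_adjacent_intervals
    (a := 0) (b := Real.sqrt a) (c := 1) (f := fun y => y * max (y^2-a) 0)
    (hcont.intervalIntegrable (μ := volume) _ _) (hcont.intervalIntegrable (μ := volume) _ _)
  have h1 : ∫ y in (0:ℝ)..(Real.sqrt a), y * max (y^2-a) 0 = 0 := by
    rw [intervalIntegral.integral_congr (g := fun _ => 0)]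
    · simp
    · intro y hy
      rw [Set.uIcc_of_le hs.1] at hy
      have : y^2 ≤ a := by
        have h2 : y^2 ≤ (Real.sqrt a)^2 := by
          apply sq_le_sq' _ hy.2
          linarith [hy.1, Real.sqrt_nonneg a]
        rwa [Real.sq_sqrt ha] at h2
      simp [max_eq_right, sub_nonpos.mpr this]
  have h2 : ∫ y in (Real.sqrt a)..(1:ℝ), y * max (y^2-a) 0
      = ∫ y in (Real.sqrt a)..(1:ℝ), (y^3 - a*y) := by
    apply intervalIntegral.integral_congr
    intro y hy
    rw [Set.uIcc_of_le hs.2] at hy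
    show y * max (y^2-a) 0 = y^3 - a*y
    have hya : a ≤ y^2 := by
      rw [← Real.sq_sqrt ha]
      apply sq_le_sq' _ hy.1
      linarith [Real.sqrt_nonneg a, hy.1]
    rw [max_eq_left (by linarith)]
    ring
  have h3 : ∫ y in (Real.sqrt a)..(1:ℝ), (y^3 - a*y) = (1-a)^2/4 := by
    have h3a : IntervalIntegrable (fun y:ℝ => y^3) volume (Real.sqrt a) 1 :=
      (continuous_pow 3).intervalIntegrable _ _
    have h3b : IntervalIntegrable (fun y:ℝ => a*y) volume (Real.sqrt a) 1 :=
      (continuous_const.mul continuous_id').intervalIntegrable _ _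
    rw [intervalIntegral.integral_sub h3a h3b]
    rw [intervalIntegral.integral_const_mul]
    simp [integral_pow, integral_id]
    rw [Real.sq_sqrt ha]
    have : Real.sqrt a ^ 4 = a^2 := by
      rw [show (4:ℕ) = 2*2 from rfl, pow_mul, Real.sq_sqrt ha]
    rw [this]; ring
  rw [← hsplit, h1, h2, h3]; ring

lemma mass_lemma (ε Ω a : ℝ) (ha : 0 ≤ a) (ha1 : a ≤ 1) :
    ∫ x in Metric.closedBall (0:EuclideanSpace ℝ (Fin 2)) 1,
      (1/2 : ℝ) * max (ε^2*(-Ω^2*a) + ε^2*Ω^2*‖x‖^2) 0 = ε^2*Ω^2*π*(1-a)^2/4 := by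
  have hpt : ∀ x : EuclideanSpace ℝ (Fin 2), (1/2 : ℝ) * max (ε^2*(-Ω^2*a) + ε^2*Ω^2*‖x‖^2) 0
      = (ε^2*Ω^2/2) * max (‖x‖^2 - a) 0 := by
    intro x
    have h1 : ε^2*(-Ω^2*a) + ε^2*Ω^2*‖x‖^2 = (ε^2*Ω^2) * (‖x‖^2 - a) := by ring
    have h2 := mul_max_of_nonneg (‖x‖^2 - a) 0 (by positivity : (0:ℝ) ≤ ε^2*Ω^2)
    rw [mul_zero] at h2
    rw [h1, ← h2]
    ring
  simp_rw [hpt]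
  rw [MeasureTheory.integral_const_mul, key_int a ha ha1]
  ring

noncomputable def rhoTF (ε Ω μ : ℝ) (x : EuclideanSpace ℝ (Fin 2)) : ℝ :=
  (1 / 2) * max (ε ^ 2 * μ + ε ^ 2 * Ω ^ 2 * ‖x‖ ^ 2) 0

noncomputable def energyTF (ε Ω : ℝ) (ρ : EuclideanSpace ℝ (Fin 2) → ℝ) : ℝ :=
  ∫ x in Metric.closedBall (0:EuclideanSpace ℝ (Fin 2)) 1,
    (-(Ω ^ 2) * ‖x‖ ^ 2 * ρ x + (ε ^ 2)⁻¹ * ρ x ^ 2)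

set_option maxHeartbeats 2000000 in
lemma mass_uniq (ε Ω : ℝ) (hε : 0 < ε) (hΩ : 0 < Ω) (h : 2 < Real.sqrt π * ε * Ω) :
    (∫ x in Metric.closedBall (0:EuclideanSpace ℝ (Fin 2)) 1,
        rhoTF ε Ω (-Ω^2*(1-2/(Real.sqrt π * ε * Ω))) x) = 1 ∧
    ∀ μ' : ℝ, (∫ x in Metric.closedBall (0:EuclideanSpace ℝ (Fin 2)) 1, rhoTF ε Ω μ' x) = 1 →
      μ' = -Ω^2*(1-2/(Real.sqrt π * ε * Ω)) := by
  have hπ := Real.pi_pos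
  obtain ⟨D, hD⟩ : ∃ D : Set (EuclideanSpace ℝ (Fin 2)),
      D = Metric.closedBall (0:EuclideanSpace ℝ (Fin 2)) 1 := ⟨_, rfl⟩
  rw [← hD]
  have hρ : ∀ (μ : ℝ) (x : EuclideanSpace ℝ (Fin 2)),
      rhoTF ε Ω μ x = (1/2 : ℝ) * max (ε^2*μ + ε^2*Ω^2*‖x‖^2) 0 := fun _ _ => rfl
  have hb : (0:ℝ) < Real.sqrt π * ε * Ω := lt_trans two_pos h
  obtain ⟨b, hbdef⟩ : ∃ b : ℝ, b = Real.sqrt π * ε * Ω := ⟨_, rfl⟩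
  rw [← hbdef] at h hb
  have hb2 : b^2 = π * ε^2 * Ω^2 := by
    rw [hbdef, mul_pow, mul_pow, Real.sq_sqrt hπ.le]
  obtain ⟨a, hadef⟩ : ∃ a : ℝ, a = 1 - 2/b := ⟨_, rfl⟩
  obtain ⟨μ0, hμ0def⟩ : ∃ m : ℝ, m = -Ω^2*a := ⟨_, rfl⟩
  have hfold : -Ω^2*(1-2/(Real.sqrt π * ε * Ω)) = μ0 := by
    rw [hμ0def, hadef, hbdef]
  rw [hfold]
  have ha0 : 0 < a := by
    have : 2/b < 1 := (div_lt_one hb).mpr h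
    rw [hadef]; linarith
  have ha1 : a < 1 := by
    have : 0 < 2/b := by positivity
    rw [hadef]; linarith
  -- mass
  have hmass0 : (∫ x in D, rhoTF ε Ω μ0 x) = 1 := by
    have := mass_lemma ε Ω a ha0.le ha1.le
    rw [hD]
    simp_rw [hρ, hμ0def]
    rw [this]
    have h1a : 1 - a = 2/b := by rw [hadef]; ring
    rw [h1a, div_pow]
    rw [show ε^2*Ω^2*π*(2^2/b^2)/4 = ε^2*Ω^2*π/b^2 by ring, hb2]
    field_simp
  -- basic integrability
  have hDmeas : MeasurableSet D := hD ▸ measurableSet_closedBall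
  have hDcomp : IsCompact D := hD ▸ isCompact_closedBall 0 1
  have hρcont : ∀ μ : ℝ, Continuous (rhoTF ε Ω μ) := by
    intro μ
    exact continuous_const.mul ((continuous_const.add
      (continuous_const.mul ((continuous_norm).pow 2))).max continuous_const)
  have hρint : ∀ μ : ℝ, IntegrableOn (rhoTF ε Ω μ) D volume := fun μ =>
    (hρcont μ).continuousOn.integrableOn_compact' hDcomp hDmeas
  have hvolD : volume D = ENNReal.ofReal π := by
    rw [hD, volball 1 zero_le_one]; norm_num
  -- annulus
  obtain ⟨t, htdef⟩ : ∃ t : ℝ, t = Real.sqrt ((a+1)/2) := ⟨_, rfl⟩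
  have ht0 : 0 ≤ t := htdef ▸ Real.sqrt_nonneg _
  have ht2 : t^2 = (a+1)/2 := by rw [htdef]; exact Real.sq_sqrt (by linarith)
  have hta : a < t^2 := by rw [ht2]; linarith
  have ht1 : t ≤ 1 := by nlinarith [ht2]
  obtain ⟨S, hSdef⟩ : ∃ S : Set (EuclideanSpace ℝ (Fin 2)), S = D \ Metric.closedBall 0 t := ⟨_, rfl⟩
  have hSsub : S ⊆ D := hSdef ▸ Set.diff_subset
  have hSmeas : MeasurableSet S := hSdef ▸ hDmeas.diff measurableSet_closedBall
  have hvolS : (volume S).toReal = π * (1 - t^2) := by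
    rw [hSdef, measure_diff (hD ▸ Metric.closedBall_subset_closedBall ht1)
      measurableSet_closedBall.nullMeasurableSet
      (by rw [volball t ht0]; exact ENNReal.ofReal_ne_top),
      hvolD, volball t ht0, ← ENNReal.ofReal_sub _ (by positivity),
      ENNReal.toReal_ofReal (by nlinarith)]
    ring
  have hvolSpos : 0 < (volume S).toReal := by
    rw [hvolS]; nlinarith
  have hvolSfin : volume S < ⊤ :=
    lt_of_le_of_lt (measure_mono hSsub) (by rw [hvolD]; exact ENNReal.ofReal_lt_top)
  -- strict monotonicity
  have mono : ∀ μ1 μ2 : ℝ, μ1 < μ2 → μ0 ≤ μ2 →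
      (∫ x in D, rhoTF ε Ω μ1 x) < ∫ x in D, rhoTF ε Ω μ2 x := by
    intro μ1 μ2 h12 h02
    have hpt : ∀ x, rhoTF ε Ω μ1 x ≤ rhoTF ε Ω μ2 x := by
      intro x
      rw [hρ, hρ]
      apply mul_le_mul_of_nonneg_left _ (by norm_num)
      exact max_le_max (by nlinarith [sq_nonneg ‖x‖]) le_rfl
    obtain ⟨c, hcdef⟩ : ∃ c : ℝ, c = min (ε^2*(μ2-μ1)/2) (ε^2*Ω^2*(t^2-a)/2) := ⟨_, rfl⟩
    have hcpos : 0 < c := by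
      rw [hcdef]
      have e2 : (0:ℝ) < ε^2 := pow_pos hε 2
      have o2 : (0:ℝ) < Ω^2 := pow_pos hΩ 2
      exact lt_min (by nlinarith) (by nlinarith [mul_pos (mul_pos e2 o2) (sub_pos.mpr hta)])
    have hS : ∀ x ∈ S, c ≤ rhoTF ε Ω μ2 x - rhoTF ε Ω μ1 x := by
      intro x hx
      rw [hSdef] at hx
      have hrt : t < ‖x‖ := by
        have := hx.2
        simpa [Metric.mem_closedBall, dist_zero_right] using this
      have hr2 : t^2 < ‖x‖^2 := by nlinarith
      have e2 : (0:ℝ) < ε^2 := pow_pos hε 2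
      have o2 : (0:ℝ) < Ω^2 := pow_pos hΩ 2
      have harg : ε^2*Ω^2*(t^2 - a) ≤ ε^2*μ2 + ε^2*Ω^2*‖x‖^2 := by
        have h02' : ε^2*μ0 + ε^2*Ω^2*‖x‖^2 = ε^2*Ω^2*(‖x‖^2 - a) := by
          rw [hμ0def]; ring
        have k1 : ε^2*μ0 ≤ ε^2*μ2 := by nlinarith
        have k2 : ε^2*Ω^2*t^2 ≤ ε^2*Ω^2*‖x‖^2 := by nlinarith [mul_pos e2 o2]
        linarith
      have harg2pos : (0:ℝ) < ε^2*μ2 + ε^2*Ω^2*‖x‖^2 := by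
        linarith [mul_pos (mul_pos e2 o2) (sub_pos.mpr hta), harg]
      rw [hρ, hρ, max_eq_left harg2pos.le]
      have hc1 : c ≤ ε^2*(μ2-μ1)/2 := hcdef ▸ min_le_left _ _
      have hc2 : c ≤ ε^2*Ω^2*(t^2-a)/2 := hcdef ▸ min_le_right _ _
      rcases le_or_gt (ε^2*μ1 + ε^2*Ω^2*‖x‖^2) 0 with hm | hm
      · rw [max_eq_right hm]
        nlinarith
      · rw [max_eq_left hm.le]
        nlinarith
    have hint1 := hρint μ1
    have hint2 := hρint μ2
    have hdiffint : IntegrableOn (fun x => rhoTF ε Ω μ2 x - rhoTF ε Ω μ1 x) D volume := hint2.sub hint1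
    have step : c * (volume S).toReal ≤ ∫ x in D, (rhoTF ε Ω μ2 x - rhoTF ε Ω μ1 x) := by
      calc c * (volume S).toReal = ∫ _ in S, c ∂volume := by
            rw [setIntegral_const, smul_eq_mul, measureReal_def]; ring
        _ ≤ ∫ x in S, (rhoTF ε Ω μ2 x - rhoTF ε Ω μ1 x) ∂volume := by
            apply setIntegral_mono_on
              (integrableOn_const hvolSfin.ne) (hdiffint.mono_set hSsub) hSmeas hS
        _ ≤ ∫ x in D, (rhoTF ε Ω μ2 x - rhoTF ε Ω μ1 x) ∂volume := by
            apply setIntegral_mono_set hdiffint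
              (ae_of_all _ (fun x => sub_nonneg.mpr (hpt x)))
              (HasSubset.Subset.eventuallyLE hSsub)
    rw [integral_sub hint2 hint1] at step
    nlinarith [mul_pos hcpos hvolSpos]
  refine ⟨hmass0, ?_⟩
  intro μ' hμ'
  by_contra hne
  rcases lt_or_gt_of_ne hne with hlt | hgt
  · have := mono μ' μ0 hlt le_rfl
    rw [hμ', hmass0] at this
    exact lt_irrefl 1 this
  · have := mono μ0 μ' hgt hgt.le
    rw [hμ', hmass0] at this
    exact lt_irrefl 1 this

set_option maxHeartbeats 2000000 in
lemma min_part (ε Ω μ0 : ℝ) (hε : 0 < ε) (hΩ : 0 < Ω)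
    (hmass0 : (∫ x in Metric.closedBall (0:EuclideanSpace ℝ (Fin 2)) 1, rhoTF ε Ω μ0 x) = 1)
    (f : EuclideanSpace ℝ (Fin 2) → ℝ) (hfpos : ∀ x, 0 ≤ f x)
    (hfmass : (∫ x in Metric.closedBall (0:EuclideanSpace ℝ (Fin 2)) 1, f x) = 1)
    (hfL2 : MemLp f 2 (volume.restrict (Metric.closedBall (0:EuclideanSpace ℝ (Fin 2)) 1))) :
    energyTF ε Ω (rhoTF ε Ω μ0) ≤ energyTF ε Ω f ∧
    (energyTF ε Ω f = energyTF ε Ω (rhoTF ε Ω μ0) →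
      ∀ᵐ x ∂(volume.restrict (Metric.closedBall (0:EuclideanSpace ℝ (Fin 2)) 1)),
        f x = rhoTF ε Ω μ0 x) := by
  have hπ := Real.pi_pos
  obtain ⟨D, hD⟩ : ∃ D : Set (EuclideanSpace ℝ (Fin 2)),
      D = Metric.closedBall (0:EuclideanSpace ℝ (Fin 2)) 1 := ⟨_, rfl⟩
  rw [← hD] at hmass0 hfmass hfL2 ⊢
  have hρ : ∀ (μ : ℝ) (x : EuclideanSpace ℝ (Fin 2)),
      rhoTF ε Ω μ x = (1/2 : ℝ) * max (ε^2*μ + ε^2*Ω^2*‖x‖^2) 0 := fun _ _ => rfl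
  have hE : ∀ ρf : EuclideanSpace ℝ (Fin 2) → ℝ, energyTF ε Ω ρf
      = ∫ x in D, (-(Ω^2) * ‖x‖^2 * ρf x + (ε^2)⁻¹ * ρf x ^2) := by
    intro ρf; rw [hD]; rfl
  have hDmeas : MeasurableSet D := hD ▸ measurableSet_closedBall
  have hDcomp : IsCompact D := hD ▸ isCompact_closedBall 0 1
  have hρcont : ∀ μ : ℝ, Continuous (rhoTF ε Ω μ) := by
    intro μ
    exact continuous_const.mul ((continuous_const.add
      (continuous_const.mul ((continuous_norm).pow 2))).max continuous_const)
  have hρint : ∀ μ : ℝ, IntegrableOn (rhoTF ε Ω μ) D volume := fun μ =>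
    (hρcont μ).continuousOn.integrableOn_compact' hDcomp hDmeas
  have hvolD : volume D = ENNReal.ofReal π := by
    rw [hD, volball 1 zero_le_one]; norm_num
  haveI hfin : IsFiniteMeasure (volume.restrict D) :=
    ⟨by rw [Measure.restrict_apply_univ, hvolD]; exact ENNReal.ofReal_lt_top⟩
  have e2 : (0:ℝ) < ε^2 := pow_pos hε 2
  have o2 : (0:ℝ) < Ω^2 := pow_pos hΩ 2
  have hfint : Integrable f (volume.restrict D) := hfL2.integrable one_le_two
  have hgint : Integrable (rhoTF ε Ω μ0) (volume.restrict D) := hρint μ0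
  have hgL2 : MemLp (rhoTF ε Ω μ0) 2 (volume.restrict D) := by
    apply MemLp.of_bound (hρcont μ0).aestronglyMeasurable ((1/2)*(ε^2*|μ0| + ε^2*Ω^2))
    rw [ae_restrict_iff' hDmeas]
    apply ae_of_all
    intro x hx
    rw [hD] at hx
    have hx1 : ‖x‖ ≤ 1 := by simpa [Metric.mem_closedBall, dist_zero_right] using hx
    have hxx : ‖x‖^2 ≤ 1 := by nlinarith [norm_nonneg x]
    rw [hρ, Real.norm_eq_abs, abs_of_nonneg (by positivity)]
    apply mul_le_mul_of_nonneg_left _ (by norm_num)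
    apply max_le _ (by positivity)
    have k1 : ε^2*μ0 ≤ ε^2*|μ0| := by nlinarith [le_abs_self μ0]
    have k2 : ε^2*Ω^2*‖x‖^2 ≤ ε^2*Ω^2 := by nlinarith [mul_pos e2 o2]
    linarith
  obtain ⟨W, hW⟩ : ∃ W : EuclideanSpace ℝ (Fin 2) → ℝ,
      W = fun x => max (μ0 + Ω^2*‖x‖^2) 0 - Ω^2*‖x‖^2 := ⟨_, rfl⟩
  have hWcont : Continuous W := by
    rw [hW]
    exact ((continuous_const.add (continuous_const.mul ((continuous_norm).pow 2))).max
      continuous_const).sub (continuous_const.mul ((continuous_norm).pow 2))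
  have hWbdd : ∀ᵐ x ∂(volume.restrict D), ‖W x‖ ≤ |μ0| + 2*Ω^2 := by
    rw [ae_restrict_iff' hDmeas]
    apply ae_of_all
    intro x hx
    rw [hD] at hx
    have hx1 : ‖x‖ ≤ 1 := by simpa [Metric.mem_closedBall, dist_zero_right] using hx
    have hxx : ‖x‖^2 ≤ 1 := by nlinarith [norm_nonneg x]
    have k2 : Ω^2*‖x‖^2 ≤ Ω^2 := by nlinarith
    have k3 : 0 ≤ Ω^2*‖x‖^2 := by positivity
    simp only [hW, Real.norm_eq_abs]
    rw [abs_le]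
    constructor
    · have h1 : (0:ℝ) ≤ max (μ0 + Ω^2*‖x‖^2) 0 := le_max_right _ _
      have := abs_nonneg μ0
      linarith
    · have h2 : max (μ0 + Ω^2*‖x‖^2) 0 ≤ |μ0| + Ω^2 :=
        max_le (by linarith [le_abs_self μ0]) (by positivity)
      linarith
  have hsubint : Integrable (fun x => f x - rhoTF ε Ω μ0 x) (volume.restrict D) := hfint.sub hgint
  have t2int : Integrable (fun x => (f x - rhoTF ε Ω μ0 x) * W x) (volume.restrict D) := by
    have := hsubint.bdd_mul hWcont.aestronglyMeasurable hWbdd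
    exact this.congr (ae_of_all _ (fun x => mul_comm _ _))
  have hsubL2 : MemLp (fun x => f x - rhoTF ε Ω μ0 x) 2 (volume.restrict D) := hfL2.sub hgL2
  have t3int : Integrable (fun x => (f x - rhoTF ε Ω μ0 x)^2) (volume.restrict D) :=
    hsubL2.integrable_sq
  have t3int' : Integrable (fun x => (ε^2)⁻¹ * (f x - rhoTF ε Ω μ0 x)^2) (volume.restrict D) :=
    t3int.const_mul _
  have t23int : Integrable (fun x => (f x - rhoTF ε Ω μ0 x) * W x
      + (ε^2)⁻¹ * (f x - rhoTF ε Ω μ0 x)^2) (volume.restrict D) := t2int.add t3int'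
  have t1int : Integrable (fun x => -(Ω^2) * ‖x‖^2 * rhoTF ε Ω μ0 x + (ε^2)⁻¹ * rhoTF ε Ω μ0 x^2)
      (volume.restrict D) := by
    apply ContinuousOn.integrableOn_compact' hDcomp hDmeas
    apply Continuous.continuousOn
    exact ((continuous_const.mul ((continuous_norm).pow 2)).mul (hρcont μ0)).add
      (continuous_const.mul ((hρcont μ0).pow 2))
  have hiden : ∀ x, -(Ω^2) * ‖x‖^2 * f x + (ε^2)⁻¹ * f x^2
      = (-(Ω^2) * ‖x‖^2 * rhoTF ε Ω μ0 x + (ε^2)⁻¹ * rhoTF ε Ω μ0 x^2)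
        + (f x - rhoTF ε Ω μ0 x) * W x + (ε^2)⁻¹ * (f x - rhoTF ε Ω μ0 x)^2 := by
    intro x
    have hM : rhoTF ε Ω μ0 x = (ε^2/2) * max (μ0 + Ω^2*‖x‖^2) 0 := by
      rw [hρ]
      have h1 : ε^2*μ0 + ε^2*Ω^2*‖x‖^2 = ε^2 * (μ0 + Ω^2*‖x‖^2) := by ring
      have h2 := mul_max_of_nonneg (μ0 + Ω^2*‖x‖^2) 0 e2.le
      rw [mul_zero] at h2
      rw [h1, ← h2]; ring
    rw [hM]
    simp only [hW]
    field_simp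
    ring
  have hdecomp : energyTF ε Ω f = energyTF ε Ω (rhoTF ε Ω μ0)
      + (∫ x in D, (f x - rhoTF ε Ω μ0 x) * W x)
      + ∫ x in D, (ε^2)⁻¹ * (f x - rhoTF ε Ω μ0 x)^2 := by
    rw [hE f, hE (rhoTF ε Ω μ0)]
    calc ∫ x in D, (-(Ω^2) * ‖x‖^2 * f x + (ε^2)⁻¹ * f x^2)
        = ∫ x in D, ((-(Ω^2) * ‖x‖^2 * rhoTF ε Ω μ0 x + (ε^2)⁻¹ * rhoTF ε Ω μ0 x^2)
            + ((f x - rhoTF ε Ω μ0 x) * W x + (ε^2)⁻¹ * (f x - rhoTF ε Ω μ0 x)^2)) :=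
          integral_congr_ae (ae_of_all _ (fun x => by beta_reduce; rw [hiden x]; ring))
      _ = (∫ x in D, (-(Ω^2) * ‖x‖^2 * rhoTF ε Ω μ0 x + (ε^2)⁻¹ * rhoTF ε Ω μ0 x^2))
            + ∫ x in D, ((f x - rhoTF ε Ω μ0 x) * W x + (ε^2)⁻¹ * (f x - rhoTF ε Ω μ0 x)^2) :=
          MeasureTheory.integral_add t1int t23int
      _ = _ := by rw [MeasureTheory.integral_add t2int t3int']; ring
  have hmassdiff : ∫ x in D, (f x - rhoTF ε Ω μ0 x) = 0 := by
    rw [MeasureTheory.integral_sub hfint hgint, hfmass, hmass0]; ring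
  have hcross : 0 ≤ ∫ x in D, (f x - rhoTF ε Ω μ0 x) * W x := by
    have hint : Integrable (fun x => (f x - rhoTF ε Ω μ0 x) * (W x - μ0)) (volume.restrict D) := by
      have h0 : Integrable (fun x => (f x - rhoTF ε Ω μ0 x) * W x - μ0 * (f x - rhoTF ε Ω μ0 x))
          (volume.restrict D) := t2int.sub (hsubint.const_mul μ0)
      exact h0.congr (ae_of_all _ (fun x => by ring))
    have hrw : ∫ x in D, (f x - rhoTF ε Ω μ0 x) * W x
        = (∫ x in D, (f x - rhoTF ε Ω μ0 x) * (W x - μ0)) + μ0 * ∫ x in D, (f x - rhoTF ε Ω μ0 x) := by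
      have e1 : ∫ x in D, (f x - rhoTF ε Ω μ0 x) * W x
          = ∫ x in D, ((f x - rhoTF ε Ω μ0 x) * (W x - μ0) + μ0 * (f x - rhoTF ε Ω μ0 x)) :=
        integral_congr_ae (ae_of_all _ (fun x => by ring))
      rw [e1, MeasureTheory.integral_add hint (hsubint.const_mul μ0),
        MeasureTheory.integral_const_mul]
    rw [hrw, hmassdiff, mul_zero, add_zero]
    apply integral_nonneg
    intro x
    simp only [Pi.zero_apply]
    beta_reduce
    rcases le_or_gt 0 (μ0 + Ω^2*‖x‖^2) with hc | hc
    · have hz : W x = μ0 := by simp only [hW]; rw [max_eq_left hc]; ring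
      rw [hz, sub_self, mul_zero]
    · have hg0 : rhoTF ε Ω μ0 x = 0 := by
        rw [hρ, max_eq_right (by nlinarith [mul_lt_mul_of_pos_left hc e2]), mul_zero]
      have hWge : 0 ≤ W x - μ0 := by
        simp only [hW]
        rw [max_eq_right hc.le]
        linarith
      rw [hg0, sub_zero]
      exact mul_nonneg (hfpos x) hWge
  have hsq : 0 ≤ ∫ x in D, (f x - rhoTF ε Ω μ0 x)^2 := integral_nonneg (fun x => sq_nonneg _)
  have hsq' : ∫ x in D, (ε^2)⁻¹ * (f x - rhoTF ε Ω μ0 x)^2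
      = (ε^2)⁻¹ * ∫ x in D, (f x - rhoTF ε Ω μ0 x)^2 := MeasureTheory.integral_const_mul _ _
  have hlastnn : 0 ≤ ∫ x in D, (ε^2)⁻¹ * (f x - rhoTF ε Ω μ0 x)^2 := by
    rw [hsq']
    exact mul_nonneg (by positivity) hsq
  constructor
  · rw [hdecomp]
    linarith
  · intro heq
    have hlast0 : ∫ x in D, (f x - rhoTF ε Ω μ0 x)^2 = 0 := by
      have h2 : (ε^2)⁻¹ * ∫ x in D, (f x - rhoTF ε Ω μ0 x)^2 ≤ 0 := by
        rw [← hsq']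
        linarith [hdecomp, heq, hcross]
      have h3 : (ε^2)⁻¹ * ∫ x in D, (f x - rhoTF ε Ω μ0 x)^2 = 0 := by
        rw [hsq'] at hlastnn
        linarith
      rcases mul_eq_zero.mp h3 with h4 | h4
      · exact absurd h4 (by positivity)
      · exact h4
    have hae := (integral_eq_zero_iff_of_nonneg_ae
      (ae_of_all _ (fun x => sq_nonneg (f x - rhoTF ε Ω μ0 x))) t3int).mp hlast0
    filter_upwards [hae] with x hx
    have hx' : (f x - rhoTF ε Ω μ0 x)^2 = 0 := hx
    have := pow_eq_zero_iff (two_ne_zero) |>.mp hx'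
    linarith [this]


/-- The TF functional `E^TF[ρ] = ∫_{B(0,1)} (-Ω² r² ρ + ε⁻² ρ²)` over nonnegative `L²`
densities of unit mass is uniquely (a.e.) minimized by
`ρ^TF(r) = ½ max(ε²μ^TF + ε²Ω²r², 0)`, where `μ^TF` is the unique constant giving unit mass. -/
theorem stmt_2 (ε Ω : ℝ) (hε : 0 < ε) (hΩ : 0 < Ω)
    (h : 2 < Real.sqrt π * ε * Ω) :
    let D : Set (EuclideanSpace ℝ (Fin 2)) := Metric.closedBall 0 1
    let ρTF : ℝ → EuclideanSpace ℝ (Fin 2) → ℝ :=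
      fun μ x => (1 / 2) * max (ε ^ 2 * μ + ε ^ 2 * Ω ^ 2 * ‖x‖ ^ 2) 0
    let ETF : (EuclideanSpace ℝ (Fin 2) → ℝ) → ℝ :=
      fun ρ => ∫ x in D, (-(Ω ^ 2) * ‖x‖ ^ 2 * ρ x + (ε ^ 2)⁻¹ * ρ x ^ 2)
    ∃ μTF : ℝ,
      (∫ x in D, ρTF μTF x) = 1 ∧
      (∀ μ' : ℝ, (∫ x in D, ρTF μ' x) = 1 → μ' = μTF) ∧
      ∀ ρ : EuclideanSpace ℝ (Fin 2) → ℝ, Measurable ρ → (∀ x, 0 ≤ ρ x) →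
        (∫ x in D, ρ x) = 1 → MemLp ρ 2 (volume.restrict D) →
        ETF (ρTF μTF) ≤ ETF ρ ∧
        (ETF ρ = ETF (ρTF μTF) → ∀ᵐ x ∂(volume.restrict D), ρ x = ρTF μTF x) := by
  intro D ρTF ETF
  obtain ⟨hmass0, huniq⟩ := mass_uniq ε Ω hε hΩ h
  exact ⟨-Ω^2*(1-2/(Real.sqrt π * ε * Ω)), hmass0, huniq,
    fun f _ hfpos hfmass hfL2 => min_part ε Ω _ hε hΩ hmass0 f hfpos hfmass hfL2⟩
end

section
/- For $\Omega_1 \in \mathbb{R}$, define $k(z) = z\big(\tfrac{2}{\pi} - 3\Omega_1 - 2z(\tfrac{2}{\sqrt{\pi}} - z)\big)$ for $z\in[0, 2/\sqrt{\pi}]$. If $0 < \Omega_1$ and $\tfrac{1}{9\pi}+\tfrac{\Omega_1}{2} < \tfrac{4}{9\pi}$, then $z_2 = \tfrac{2}{3\sqrt{\pi}} + \sqrt{\tfrac{1}{9\pi}+\tfrac{\Omega_1}{2}}$ lies in $(0, 2/\sqrt{\pi})$, is a critical point of $k$ (i.e. $k'(z_2)=0$), and satisfies $k(z_2) < 0$.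 -/
open Real

/-- For `0 < Ω₁` with `1/(9π) + Ω₁/2 < 4/(9π)`, the point
`z₂ = 2/(3√π) + √(1/(9π)+Ω₁/2)` lies in `(0, 2/√π)`, is a critical point of the
cost cubic `k`, and `k(z₂) < 0`. -/
theorem stmt_3 (Ω1 : ℝ) (h0 : 0 < Ω1) (h1 : 1 / (9 * π) + Ω1 / 2 < 4 / (9 * π)) :
    let k : ℝ → ℝ := fun z => z * (2 / π - 3 * Ω1 - 2 * z * (2 / Real.sqrt π - z))
    let z2 : ℝ := 2 / (3 * Real.sqrt π) + Real.sqrt (1 / (9 * π) + Ω1 / 2)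
    0 < z2 ∧ z2 < 2 / Real.sqrt π ∧ deriv k z2 = 0 ∧ k z2 < 0 := by
  intro k z2
  have hπ : (0:ℝ) < π := Real.pi_pos
  set s : ℝ := Real.sqrt π with hs_def
  have hs : 0 < s := Real.sqrt_pos.mpr hπ
  have hs2 : s ^ 2 = π := Real.sq_sqrt hπ.le
  have hD : (0:ℝ) < 1 / (9 * π) + Ω1 / 2 := by positivity
  set r : ℝ := Real.sqrt (1 / (9 * π) + Ω1 / 2) with hr_def
  have hr : 0 < r := Real.sqrt_pos.mpr hD
  have hr2 : r ^ 2 = 1 / (9 * π) + Ω1 / 2 := Real.sq_sqrt hD.le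
  have hr2' : r ^ 2 = 1 / (9 * s ^ 2) + Ω1 / 2 := by rw [hr2, hs2]
  have hz2 : z2 = 2 / (3 * s) + r := rfl
  -- r < 2/(3s)
  have hrlt : r < 2 / (3 * s) := by
    have h2 : r ^ 2 < (2 / (3 * s)) ^ 2 := by
      have he : (2 / (3 * s)) ^ 2 = 4 / (9 * π) := by rw [← hs2]; ring
      rw [he, hr2]; exact h1
    exact lt_of_pow_lt_pow_left₀ 2 (by positivity) h2
  have hrgt : 1 / (3 * s) < r := by
    have h2 : (1 / (3 * s)) ^ 2 < r ^ 2 := by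
      have he : (1 / (3 * s)) ^ 2 = 1 / (9 * s ^ 2) := by ring
      rw [he, hr2']; linarith
    exact lt_of_pow_lt_pow_left₀ 2 hr.le h2
  have hz2pos : 0 < z2 := by rw [hz2]; positivity
  have hz2lt : z2 < 2 / s := by
    rw [hz2]
    have : 2 / (3 * s) + 2 / (3 * s) < 2 / s := by
      rw [← add_div, div_lt_div_iff₀ (by positivity) hs]
      nlinarith
    linarith
  -- derivative
  have hkp : k = fun z : ℝ => 2 * z ^ 3 - (4 / s) * z ^ 2 + (2 / π - 3 * Ω1) * z := by
    funext z; show z * (2 / π - 3 * Ω1 - 2 * z * (2 / s - z)) = _; ring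
  have hder : HasDerivAt k (2 * (3 * z2 ^ 2) - (4 / s) * (2 * z2) + (2 / π - 3 * Ω1)) z2 := by
    rw [hkp]
    have h3 : HasDerivAt (fun z : ℝ => z ^ 3) (3 * z2 ^ 2) z2 := by
      simpa using hasDerivAt_pow 3 z2
    have h2' : HasDerivAt (fun z : ℝ => z ^ 2) (2 * z2) z2 := by
      simpa using hasDerivAt_pow 2 z2
    have h1' : HasDerivAt (fun z : ℝ => z) 1 z2 := hasDerivAt_id z2
    have := ((h3.const_mul 2).sub (h2'.const_mul (4 / s))).add (h1'.const_mul (2 / π - 3 * Ω1))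
    exact this.congr_deriv (by ring)
  have hderval : 2 * (3 * z2 ^ 2) - (4 / s) * (2 * z2) + (2 / π - 3 * Ω1) = 0 := by
    have hs' : s ≠ 0 := hs.ne'
    have step : 2 * (3 * z2 ^ 2) - (4 / s) * (2 * z2) + (2 / π - 3 * Ω1)
        = 6 * r ^ 2 - 2 / (3 * s ^ 2) - 3 * Ω1 := by
      rw [hz2, ← hs2]
      field_simp
      ring
    rw [step, hr2']
    field_simp
    ring
  have hderiv0 : deriv k z2 = 0 := by rw [hder.deriv, hderval]
  refine ⟨hz2pos, hz2lt, hderiv0, ?_⟩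
  -- k z2 < 0
  have hE : 2 / π - 3 * Ω1 - 2 * z2 * (2 / s - z2) < 0 := by
    have hs' : s ≠ 0 := hs.ne'
    have key1 : 2 / π - 3 * Ω1 - 2 * z2 * (2 / s - z2)
        = 2 * r ^ 2 - 4 / (3 * s) * r + 2 / (9 * s ^ 2) - 3 * Ω1 := by
      rw [hz2, ← hs2]
      field_simp
      ring
    rw [key1, hr2']
    have key2 : 2 * (1 / (9 * s ^ 2) + Ω1 / 2) - 4 / (3 * s) * r + 2 / (9 * s ^ 2) - 3 * Ω1
        = 4 / (9 * s ^ 2) - 2 * Ω1 - 4 / (3 * s) * r := by ring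
    rw [key2]
    have h4 : 4 / (9 * s ^ 2) < 4 / (3 * s) * r := by
      have hc : 4 / (9 * s ^ 2) = 4 / (3 * s) * (1 / (3 * s)) := by
        field_simp; ring
      rw [hc]
      exact mul_lt_mul_of_pos_left hrgt (by positivity)
    linarith
  have hval : k z2 = z2 * (2 / π - 3 * Ω1 - 2 * z2 * (2 / s - z2)) := rfl
  rw [hval]
  exact mul_neg_of_pos_of_neg hz2pos hE
end

section
/- Let $\Omega_1 > 0$ be small and $k(z) = z\big(\tfrac{2}{\pi} - 3\Omega_1 - 2z(\tfrac{2}{\sqrt{\pi}} - z)\big)$ on $[0,2/\sqrt{\pi}]$, with $z_2 = \tfrac{2}{3\sqrt{\pi}} + \sqrt{\tfrac{1}{9\pi}+\tfrac{\Omega_1}{2}}$. Then there exist constants $k_1,k_2,k_3,\delta > 0$ such that for all $\Omega_1\in(0,\delta)$ and all $z\in[0,2/\sqrt{\pi}]$ with $|z - z_2| > k_1\Omega_1^{1/4}$ and $z > k_2\Omega_1^{1/2}$, one has $k(z) > k_3\Omega_1^{1/2}$. -/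
set_option maxHeartbeats 1000000
open Real

/-- For small `Ω₁ > 0`, the cost cubic `k` is bounded below by `k₃ √Ω₁` on the part
of `[0, 2/√π]` away from its two near-zeros `0` and `z₂`. -/
theorem stmt_6 :
    ∃ k1 > (0 : ℝ), ∃ k2 > (0 : ℝ), ∃ k3 > (0 : ℝ), ∃ δ > (0 : ℝ),
      ∀ Ω1 : ℝ, 0 < Ω1 → Ω1 < δ →
        ∀ z ∈ Set.Icc (0 : ℝ) (2 / Real.sqrt π),
          |z - (2 / (3 * Real.sqrt π) + Real.sqrt (1 / (9 * π) + Ω1 / 2))| >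
              k1 * Ω1 ^ ((1 : ℝ) / 4) →
          z > k2 * Real.sqrt Ω1 →
          z * (2 / π - 3 * Ω1 - 2 * z * (2 / Real.sqrt π - z)) > k3 * Real.sqrt Ω1 := by
  refine ⟨1, one_pos, 1, one_pos, 1/(8*π), by positivity, 1/10000, by norm_num, ?_⟩
  intro Ω1 hΩ hδ z hz habs hzw
  obtain ⟨hz0, hzU⟩ := hz
  have hπl : (3.1415 : ℝ) < π := by linarith [Real.pi_gt_d6]
  have hπu : π < 3.1416 := by linarith [Real.pi_lt_d6]
  set p := Real.sqrt π with hpdef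
  have hp0 : 0 < p := Real.sqrt_pos.mpr Real.pi_pos
  have hp2 : p^2 = π := Real.sq_sqrt Real.pi_pos.le
  have hpl : (1.77:ℝ) < p := by nlinarith
  have hpu : p < 1.7725 := by nlinarith
  set w := Real.sqrt Ω1 with hwdef
  have hw0 : 0 < w := Real.sqrt_pos.mpr hΩ
  have hw2 : w^2 = Ω1 := Real.sq_sqrt hΩ.le
  have hwu : w < 1/100 := by nlinarith
  set q := Ω1 ^ ((1:ℝ)/4) with hqdef
  have hq0 : 0 < q := Real.rpow_pos_of_pos hΩ _
  have hq2 : q^2 = w := by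
    rw [hqdef, hwdef, Real.sqrt_eq_rpow, ← Real.rpow_natCast (Ω1 ^ ((1:ℝ)/4)) 2,
      ← Real.rpow_mul hΩ.le]
    norm_num
  have hqu : q < 1/10 := by nlinarith
  set t := Real.sqrt (1/(9*π) + Ω1/2) with htdef
  have ht0 : 0 ≤ t := Real.sqrt_nonneg _
  have ht2 : t^2 = 1/(9*π) + Ω1/2 := Real.sq_sqrt (by positivity)
  set a := 1/p with hadef
  have ha0 : 0 < a := by positivity
  have ha2 : a^2 = 1/π := by rw [hadef, div_pow, one_pow, hp2]
  have hal : (0.564:ℝ) < a := by rw [hadef, lt_div_iff₀ hp0]; nlinarith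
  have hau : a < 0.5651 := by rw [hadef, div_lt_iff₀ hp0]; nlinarith
  rw [one_mul] at habs hzw
  have hΩq : Ω1 = q^4 := by rw [← hw2, ← hq2]; ring
  have hkey : 2/π - 3*Ω1 - 2*z*(2/p - z) = 2*(z - a)^2 - 3*w^2 := by
    rw [hadef, ← hp2, ← hw2]
    field_simp
    ring
  have h8 : (1:ℝ)/(8*π) < 0.05 := by
    rw [div_lt_iff₀ (by positivity)]
    linarith
  have h8w : (1/(8*π)) * w < 0.05 * w := by
    exact mul_lt_mul_of_pos_right h8 hw0
  rcases le_or_gt z (a/2) with hcase | hcase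
  · -- z small : quadratic factor is of order 1
    have hza : (z - a)^2 ≥ a^2/4 := by nlinarith
    have hE : 2/π - 3*Ω1 - 2*z*(2/p - z) ≥ 0.15 := by
      rw [hkey]
      have h1 : a^2 ≥ 0.318 := by rw [ha2]; rw [ge_iff_le, le_div_iff₀ Real.pi_pos]; nlinarith
      nlinarith
    nlinarith [mul_nonneg (by linarith : (0:ℝ) ≤ z - w) (by linarith : (0:ℝ) ≤ 2/π - 3*Ω1 - 2*z*(2/p - z))]
  · -- z away from 0 : use distance to z₂
    have hprod : (t - a/3)*(t + a/3) = Ω1/2 := by linear_combination ht2 - ha2/9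
    have ht3 : a/3 ≤ t := by
      by_contra h
      push_neg at h
      have h1 := mul_self_lt_mul_self ht0 h
      linarith [hprod]
    have ht4 : t - a/3 ≤ 1.4 * Ω1 := by
      by_contra h
      push_neg at h
      have h37 : (0.37:ℝ) < t + a/3 := by linarith
      have h1 : 1.4*Ω1 * 0.37 < (t - a/3)*(t + a/3) :=
        mul_lt_mul'' h h37 (by positivity) (by norm_num)
      rw [hprod] at h1
      linarith
    have hX : a - (2/(3*p) + t) = a/3 - t := by rw [hadef]; ring
    have hY : |a/3 - t| ≤ 1.4*Ω1 := by
      rw [abs_of_nonpos (show a/3 - t ≤ 0 by linarith)]; linarith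
    have htri : |z - a| ≥ q - 1.4 * Ω1 := by
      have h1 := abs_sub_abs_le_abs_sub (z - (2/(3*p) + t)) (a - (2/(3*p) + t))
      have h2 : (z - (2/(3*p) + t)) - (a - (2/(3*p) + t)) = z - a := by ring
      rw [h2, hX] at h1
      linarith [habs, hY]
    have h3 : q^3 ≤ (1/10)^3 := pow_le_pow_left₀ hq0.le hqu.le 3
    have h4 : q^4 ≤ q * (1/1000) := by
      calc q^4 = q * q^3 := by ring
      _ ≤ q * (1/10)^3 := mul_le_mul_of_nonneg_left h3 hq0.le
      _ = q * (1/1000) := by norm_num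
    have hq14 : q - 1.4 * Ω1 ≥ 0.99 * q := by
      rw [hΩq]; linarith [h4, hq0]
    have h5 : 0.99*q ≤ |z - a| := by linarith
    have habs2 : (0.99*q)^2 ≤ (z - a)^2 := by
      have h6 := mul_self_le_mul_self (show (0:ℝ) ≤ 0.99*q by positivity) h5
      have h7 := abs_mul_abs_self (z - a)
      linarith [h6, h7]
    have h6 : (0.99*q)^2 = 0.9801 * w := by rw [mul_pow, hq2]; norm_num
    have h7 : w^2 ≤ 0.01 * w := by
      have := mul_le_mul_of_nonneg_left hwu.le hw0.le
      linarith [this]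
    have hE : 2/π - 3*Ω1 - 2*z*(2/p - z) ≥ 1.9 * w := by
      rw [hkey]; linarith [habs2, h6, h7]
    have hzl : z > 0.28 := by linarith
    have hF : (0:ℝ) ≤ (z - 0.28) * (2/π - 3*Ω1 - 2*z*(2/p - z)) :=
      mul_nonneg (by linarith) (by linarith [hE, hw0])
    linarith [hF, hE, h8w, hw0]
end

section
/- With notation as above ($0 < R_< < R_* < 1$, $g^2$ continuous positive, $A = \int_{R_<}^{R_*} g^2(s)s^{-1}ds$, $B = \int_{R_*}^{1} g^2(s)s^{-1}ds$, and $h_*$ the associated potential of the normalized arclength measure $\delta_*$), the electrostatic energy satisfies $I_* := \int_{\mathcal{A}} \tfrac{1}{g^2}|\nabla h_*|^2 \,dx = \tfrac{AB}{2\pi(A+B)} = h_*(R_*)$. -/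
open MeasureTheory Real Set

section Aux

variable {Rlt Rstar : ℝ} {g2 : ℝ → ℝ}

lemma aux_cont (h0 : 0 < Rlt) (hg2c : ContinuousOn g2 (Set.Icc Rlt 1)) :
    ContinuousOn (fun s => g2 s / s) (Set.Icc Rlt 1) :=
  hg2c.div continuousOn_id (fun s hs => (h0.trans_le hs.1).ne')

lemma aux_int (h0 : 0 < Rlt) (hg2c : ContinuousOn g2 (Set.Icc Rlt 1))
    {a b : ℝ} (hRa : Rlt ≤ a) (hab : a ≤ b) (hb1 : b ≤ 1) :
    IntervalIntegrable (fun s => g2 s / s) volume a b := by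
  apply ContinuousOn.intervalIntegrable
  apply (aux_cont h0 hg2c).mono
  rw [Set.uIcc_of_le hab]
  exact Set.Icc_subset_Icc hRa hb1

lemma aux_pos (h0 : 0 < Rlt) (hg2c : ContinuousOn g2 (Set.Icc Rlt 1))
    (hg2pos : ∀ s ∈ Set.Icc Rlt 1, 0 < g2 s)
    {a b : ℝ} (hRa : Rlt ≤ a) (hab : a < b) (hb1 : b ≤ 1) :
    0 < ∫ s in a..b, g2 s / s := by
  apply intervalIntegral.intervalIntegral_pos_of_pos_on (aux_int h0 hg2c hRa hab.le hb1)
    _ hab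
  intro x hx
  exact div_pos (hg2pos x ⟨hRa.trans hx.1.le, hx.2.le.trans hb1⟩)
    (h0.trans_le (hRa.trans hx.1.le))

/-- The main energy computation. -/
lemma aux_key (Rlt Rstar A B : ℝ) (h0 : 0 < Rlt) (h1 : Rlt < Rstar) (h2 : Rstar < 1)
    (g2 : ℝ → ℝ) (hg2c : ContinuousOn g2 (Set.Icc Rlt 1))
    (hg2pos : ∀ s ∈ Set.Icc Rlt 1, 0 < g2 s)
    (hAdef : A = ∫ s in Rlt..Rstar, g2 s / s)
    (hBdef : B = ∫ s in Rstar..(1 : ℝ), g2 s / s)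
    (h : ℝ → ℝ)
    (hh : ∀ r, h r =
      if r ≤ Rstar then A * B / (2 * π * (A + B)) * (A⁻¹ * ∫ s in Rlt..r, g2 s / s)
      else A * B / (2 * π * (A + B)) * (B⁻¹ * ∫ s in r..(1 : ℝ), g2 s / s)) :
    (∫ x in {x : EuclideanSpace ℝ (Fin 2) | Rlt ≤ ‖x‖ ∧ ‖x‖ ≤ 1},
        (g2 ‖x‖)⁻¹ * ‖gradient (fun y => h ‖y‖) x‖ ^ 2) =
      A * B / (2 * π * (A + B)) := by
  have hA : 0 < A := hAdef ▸ aux_pos h0 hg2c hg2pos le_rfl h1 h2.le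
  have hB : 0 < B := hBdef ▸ aux_pos h0 hg2c hg2pos h1.le h2 le_rfl
  set C : ℝ := A * B / (2 * π * (A + B)) with hCdef
  set f1 : ℝ → ℝ := fun s => g2 s / s with hf1def
  set d : ℝ → ℝ := fun r => if r ≤ Rstar then C / A * f1 r else -(C / B) * f1 r with hddef
  set gg : ℝ → ℝ := fun r => (g2 r)⁻¹ * d r ^ 2 with hggdef
  -- derivative of h
  have hderiv : ∀ r : ℝ, Rlt < r → r < 1 → r ≠ Rstar → HasDerivAt h (d r) r := by
    intro r hr1 hr2 hrs
    have hmem : Set.Icc Rlt 1 ∈ nhds r := Icc_mem_nhds hr1 hr2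
    have hmeas : StronglyMeasurableAtFilter f1 (nhds r) :=
      ⟨Set.Icc Rlt 1, hmem, (aux_cont h0 hg2c).aestronglyMeasurable measurableSet_Icc⟩
    have hcont : ContinuousAt f1 r := (aux_cont h0 hg2c).continuousAt hmem
    rcases lt_or_gt_of_ne hrs with hlt | hgt
    · have hFTC : HasDerivAt (fun t => ∫ s in Rlt..t, f1 s) (f1 r) r :=
        intervalIntegral.integral_hasDerivAt_right (aux_int h0 hg2c le_rfl hr1.le hr2.le)
          hmeas hcont
      have h' : HasDerivAt (fun t => C * (A⁻¹ * ∫ s in Rlt..t, f1 s)) (C * (A⁻¹ * f1 r)) r :=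
        (hFTC.const_mul A⁻¹).const_mul C
      have heq : h =ᶠ[nhds r] fun t => C * (A⁻¹ * ∫ s in Rlt..t, f1 s) := by
        filter_upwards [Iio_mem_nhds hlt] with t ht
        rw [hh t, if_pos ht.le]
      have := h'.congr_of_eventuallyEq heq
      refine this.congr_deriv ?_
      rw [hddef]
      simp only [if_pos hlt.le]
      ring
    · have hFTC : HasDerivAt (fun t => ∫ s in t..(1 : ℝ), f1 s) (-f1 r) r :=
        intervalIntegral.integral_hasDerivAt_left (aux_int h0 hg2c hr1.le hr2.le le_rfl)
          hmeas hcont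
      have h' : HasDerivAt (fun t => C * (B⁻¹ * ∫ s in t..(1 : ℝ), f1 s))
          (C * (B⁻¹ * -f1 r)) r := (hFTC.const_mul B⁻¹).const_mul C
      have heq : h =ᶠ[nhds r] fun t => C * (B⁻¹ * ∫ s in t..(1 : ℝ), f1 s) := by
        filter_upwards [Ioi_mem_nhds hgt] with t ht
        rw [hh t, if_neg (not_le.2 ht)]
      have := h'.congr_of_eventuallyEq heq
      refine this.congr_deriv ?_
      rw [hddef]
      simp only [if_neg (not_le.2 hgt)]
      ring
  -- norm of gradient
  have hgrad : ∀ x : EuclideanSpace ℝ (Fin 2), Rlt < ‖x‖ → ‖x‖ < 1 → ‖x‖ ≠ Rstar →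
      ‖gradient (fun y => h ‖y‖) x‖ = |d ‖x‖| := by
    intro x hx1 hx2 hx3
    have hx0 : x ≠ 0 := by
      intro hx
      rw [hx, norm_zero] at hx1
      exact absurd (h0.trans hx1) (lt_irrefl 0)
    have hnd : DifferentiableAt ℝ (fun y : EuclideanSpace ℝ (Fin 2) => ‖y‖) x :=
      (contDiffAt_norm ℝ (n := 1) hx0).differentiableAt one_ne_zero
    have hF : HasFDerivAt (fun y : EuclideanSpace ℝ (Fin 2) => ‖y‖) (fderiv ℝ (fun y : EuclideanSpace ℝ (Fin 2) => ‖y‖) x) x :=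
      hnd.hasFDerivAt
    have hd' : HasDerivAt h (d ‖x‖) ‖x‖ := hderiv ‖x‖ hx1 hx2 hx3
    have hcomp : HasFDerivAt (fun y : EuclideanSpace ℝ (Fin 2) => h ‖y‖)
        (d ‖x‖ • fderiv ℝ (fun y : EuclideanSpace ℝ (Fin 2) => ‖y‖) x) x := hd'.comp_hasFDerivAt x hF
    have hg : gradient (fun y : EuclideanSpace ℝ (Fin 2) => h ‖y‖) x =
        (InnerProductSpace.toDual ℝ (EuclideanSpace ℝ (Fin 2))).symm (d ‖x‖ • fderiv ℝ (fun y : EuclideanSpace ℝ (Fin 2) => ‖y‖) x) :=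
      hcomp.hasGradientAt.gradient
    rw [hg, LinearIsometryEquiv.norm_map, norm_smul, norm_fderiv_norm hnd, mul_one,
      Real.norm_eq_abs]
  -- spheres are null
  have hsph : ∀ c : ℝ, volume {x : EuclideanSpace ℝ (Fin 2) | ‖x‖ = c} = 0 := by
    intro c
    have hset : {x : EuclideanSpace ℝ (Fin 2) | ‖x‖ = c} = Metric.sphere (0 : EuclideanSpace ℝ (Fin 2)) c := by
      ext x
      simp [mem_sphere_zero_iff_norm]
    rw [hset]
    exact Measure.addHaar_sphere volume 0 c
  have hSmeas : MeasurableSet {x : EuclideanSpace ℝ (Fin 2) | Rlt ≤ ‖x‖ ∧ ‖x‖ ≤ 1} :=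
    (measurableSet_le measurable_const measurable_norm).inter
      (measurableSet_le measurable_norm measurable_const)
  have hae : ∀ᵐ x : EuclideanSpace ℝ (Fin 2) ∂volume, x ∈ {x : EuclideanSpace ℝ (Fin 2) | Rlt ≤ ‖x‖ ∧ ‖x‖ ≤ 1} →
      (g2 ‖x‖)⁻¹ * ‖gradient (fun y => h ‖y‖) x‖ ^ 2 = (Set.Icc Rlt 1).indicator gg ‖x‖ := by
    filter_upwards [measure_eq_zero_iff_ae_notMem.mp (hsph Rlt),
      measure_eq_zero_iff_ae_notMem.mp (hsph 1), measure_eq_zero_iff_ae_notMem.mp (hsph Rstar)]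
      with x hxa hxb hxc hxS
    have hr1 : Rlt < ‖x‖ := lt_of_le_of_ne hxS.1 (Ne.symm hxa)
    have hr2 : ‖x‖ < 1 := lt_of_le_of_ne hxS.2 hxb
    rw [hgrad x hr1 hr2 hxc, sq_abs, Set.indicator_of_mem (Set.mem_Icc.mpr ⟨hr1.le, hr2.le⟩), hggdef]
  -- main computation
  have hIccIoi : Set.Icc Rlt (1 : ℝ) ⊆ Set.Ioi 0 := fun y hy => h0.trans_le hy.1
  have key1 : (∫ x in {x : EuclideanSpace ℝ (Fin 2) | Rlt ≤ ‖x‖ ∧ ‖x‖ ≤ 1},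
      (g2 ‖x‖)⁻¹ * ‖gradient (fun y => h ‖y‖) x‖ ^ 2) =
      ∫ x : EuclideanSpace ℝ (Fin 2), (Set.Icc Rlt 1).indicator gg ‖x‖ := by
    rw [setIntegral_congr_ae hSmeas hae]
    apply setIntegral_eq_integral_of_forall_compl_eq_zero
    intro x hx
    rw [Set.indicator_of_notMem]
    intro hmem
    exact hx ⟨hmem.1, hmem.2⟩
  -- reduce to one dimension
  have key2 : (∫ x : EuclideanSpace ℝ (Fin 2), (Set.Icc Rlt 1).indicator gg ‖x‖) =
      2 * (π * ∫ y in Set.Ioi (0 : ℝ), y * (Set.Icc Rlt 1).indicator gg y) := by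
    rw [integral_fun_norm_addHaar (volume : Measure (EuclideanSpace ℝ (Fin 2)))
      ((Set.Icc Rlt 1).indicator gg)]
    have hdim : Module.finrank ℝ (EuclideanSpace ℝ (Fin 2)) = 2 := finrank_euclideanSpace_fin
    have hvol : (volume (Metric.ball (0 : EuclideanSpace ℝ (Fin 2)) 1)).toReal = π := by
      rw [EuclideanSpace.volume_ball (Fin 2) 0 1]
      norm_num [Fintype.card_fin, Real.sq_sqrt Real.pi_nonneg, Real.Gamma_two,
        ENNReal.toReal_ofReal Real.pi_nonneg]
    rw [hdim, measureReal_def, hvol]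
    norm_num [nsmul_eq_mul, smul_eq_mul, pow_one]
  -- the one-dimensional integral
  have key3 : (∫ y in Set.Ioi (0 : ℝ), y * (Set.Icc Rlt 1).indicator gg y) =
      C ^ 2 / A + C ^ 2 / B := by
    have e1 : ∀ y : ℝ, y * (Set.Icc Rlt 1).indicator gg y =
        (Set.Icc Rlt 1).indicator (fun y => y * gg y) y := by
      intro y
      by_cases hy : y ∈ Set.Icc Rlt (1 : ℝ)
      · rw [Set.indicator_of_mem hy, Set.indicator_of_mem hy]
      · rw [Set.indicator_of_notMem hy, Set.indicator_of_notMem hy, mul_zero]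
    simp_rw [e1]
    rw [setIntegral_indicator measurableSet_Icc,
      Set.inter_eq_self_of_subset_right hIccIoi,
      integral_Icc_eq_integral_Ioc,
      ← intervalIntegral.integral_of_le (h1.trans h2).le]
    -- interval integrability of the two pieces
    have hae1 : ∀ y ∈ Set.Ioc Rlt Rstar, y * gg y = (C / A) ^ 2 * f1 y := by
      intro y hy
      have hy0 : (y : ℝ) ≠ 0 := (h0.trans hy.1).ne'
      have hg2y : g2 y ≠ 0 := (hg2pos y ⟨hy.1.le, hy.2.trans h2.le⟩).ne'
      rw [hggdef, hddef]
      simp only [if_pos hy.2, hf1def]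
      field_simp
    have hae2 : ∀ y ∈ Set.Ioc Rstar (1 : ℝ), y * gg y = (C / B) ^ 2 * f1 y := by
      intro y hy
      have hy0 : (y : ℝ) ≠ 0 := (h0.trans (h1.trans hy.1)).ne'
      have hg2y : g2 y ≠ 0 := (hg2pos y ⟨(h1.trans hy.1).le, hy.2⟩).ne'
      rw [hggdef, hddef]
      simp only [if_neg (not_le.2 hy.1), hf1def]
      field_simp
    have hI1 : IntervalIntegrable (fun y => y * gg y) volume Rlt Rstar := by
      apply ((aux_int h0 hg2c le_rfl h1.le h2.le).const_mul ((C / A) ^ 2)).congr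
      rw [Set.uIoc_of_le h1.le]
      intro y hy
      exact (hae1 y hy).symm
    have hI2 : IntervalIntegrable (fun y => y * gg y) volume Rstar 1 := by
      apply ((aux_int h0 hg2c h1.le h2.le le_rfl).const_mul ((C / B) ^ 2)).congr
      rw [Set.uIoc_of_le h2.le]
      intro y hy
      exact (hae2 y hy).symm
    rw [← intervalIntegral.integral_add_adjacent_intervals hI1 hI2]
    have e2 : (∫ y in Rlt..Rstar, y * gg y) = C ^ 2 / A := by
      rw [intervalIntegral.integral_congr_ae (g := fun y => (C / A) ^ 2 * f1 y) ?_]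
      · rw [intervalIntegral.integral_const_mul, hf1def, ← hAdef]
        field_simp
      · rw [Set.uIoc_of_le h1.le]
        filter_upwards with y hy
        exact hae1 y hy
    have e3 : (∫ y in Rstar..(1 : ℝ), y * gg y) = C ^ 2 / B := by
      rw [intervalIntegral.integral_congr_ae (g := fun y => (C / B) ^ 2 * f1 y) ?_]
      · rw [intervalIntegral.integral_const_mul, hf1def, ← hBdef]
        field_simp
      · rw [Set.uIoc_of_le h2.le]
        filter_upwards with y hy
        exact hae2 y hy
    rw [e2, e3]
  rw [key1, key2, key3, hCdef]
  have hAB : A + B ≠ 0 := (add_pos hA hB).ne'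
  have hpi : (π : ℝ) ≠ 0 := Real.pi_ne_zero
  field_simp
  ring

end Aux

/-- The electrostatic energy of the equilibrium potential `h_*` of `δ_*`:
`I_* = ∫_𝒜 g⁻² |∇h_*|² = AB/(2π(A+B)) = h_*(R_*)`. -/
theorem stmt_9 (Rlt Rstar : ℝ) (h0 : 0 < Rlt) (h1 : Rlt < Rstar) (h2 : Rstar < 1)
    (g2 : ℝ → ℝ) (hg2c : ContinuousOn g2 (Set.Icc Rlt 1))
    (hg2pos : ∀ s ∈ Set.Icc Rlt 1, 0 < g2 s) :
    let A : ℝ := ∫ s in Rlt..Rstar, g2 s / s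
    let B : ℝ := ∫ s in Rstar..(1 : ℝ), g2 s / s
    let hstar : ℝ → ℝ := fun r =>
      if r ≤ Rstar then A * B / (2 * π * (A + B)) * (A⁻¹ * ∫ s in Rlt..r, g2 s / s)
      else A * B / (2 * π * (A + B)) * (B⁻¹ * ∫ s in r..(1 : ℝ), g2 s / s)
    (∫ x in {x : EuclideanSpace ℝ (Fin 2) | Rlt ≤ ‖x‖ ∧ ‖x‖ ≤ 1},
        (g2 ‖x‖)⁻¹ * ‖gradient (fun y => hstar ‖y‖) x‖ ^ 2) =
      A * B / (2 * π * (A + B)) ∧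
    hstar Rstar = A * B / (2 * π * (A + B)) := by
  intro A B hstar
  have hA : 0 < A := aux_pos h0 hg2c hg2pos le_rfl h1 h2.le
  constructor
  · exact aux_key Rlt Rstar A B h0 h1 h2 g2 hg2c hg2pos rfl rfl hstar (fun r => rfl)
  · show (if Rstar ≤ Rstar then
        A * B / (2 * π * (A + B)) * (A⁻¹ * ∫ s in Rlt..Rstar, g2 s / s)
      else A * B / (2 * π * (A + B)) * (B⁻¹ * ∫ s in Rstar..(1 : ℝ), g2 s / s)) =
      A * B / (2 * π * (A + B))
    rw [if_pos le_rfl]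
    have hAeq : (∫ s in Rlt..Rstar, g2 s / s) = A := rfl
    rw [hAeq, inv_mul_cancel₀ hA.ne', mul_one]
end
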